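/- Let L be a principally generated C-lattice that is a lattice domain and let a ∈ L be nonzero. Then a_v = ⋀ { (x : y) | x, y are principal elements of L and a ≤ (x : y) }. -/

import Mathlib

/-- A multiplicative lattice: a complete lattice (bottom `⊥` playing the role of `0`)
which is a commutative monoid whose identity `1` is the top element, and in which
multiplication distributes over arbitrary joins. -/
class MulLattice (L : Type*) extends CompleteLattice L, CommMonoid L where
  one_eq_top : (1 : L) = ⊤
  mul_sSup : ∀ (a : L) (S : Set L), a * sSup S = ⨆ b ∈ S, a * b

namespace MulLattice

variable {L : Type*} [MulLattice L]

/-- The residual `(y : x) = ⋁ {a | a * x ≤ y}`. -/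
def res (y x : L) : L := sSup {a : L | a * x ≤ y}

/-- `x` is meet-principal: `y ⊓ z * x = ((y : x) ⊓ z) * x` for all `y, z`. -/
def IsMeetPrincipal (x : L) : Prop := ∀ y z : L, y ⊓ z * x = (res y x ⊓ z) * x

/-- `x` is join-principal: `y ⊔ (z : x) = ((y * x ⊔ z) : x)` for all `y, z`. -/
def IsJoinPrincipal (x : L) : Prop := ∀ y z : L, y ⊔ res z x = res (y * x ⊔ z) x

/-- `x` is principal if it is both meet-principal and join-principal. -/
def IsPrincipal (x : L) : Prop := IsMeetPrincipal x ∧ IsJoinPrincipal x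

/-- A prime element: a proper element `p` with `x * y ≤ p → x ≤ p ∨ y ≤ p`. -/
def IsPrime (p : L) : Prop := p ≠ 1 ∧ ∀ x y : L, x * y ≤ p → x ≤ p ∨ y ≤ p

/-- A maximal element: an element maximal in `L - {1}`. -/
def IsMaximal (m : L) : Prop := m ≠ 1 ∧ ∀ b : L, m < b → b = 1

end MulLattice

/-- Compactness of an element of a complete lattice, with the meaning Mathlib's
`CompleteLattice.IsCompactElement` had in December 2024. -/
def CompleteLattice.IsCompactElement {α : Type*} [CompleteLattice α] (k : α) :=
  ∀ s : Set α, k ≤ sSup s → ∃ t : Finset α, ↑t ⊆ s ∧ k ≤ t.sup id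

/-- A principally generated C-lattice: a multiplicative lattice in which `1` is compact,
compact elements are closed under multiplication, every element is a join of compact
elements and every element is a join of principal elements. -/
class PGCLattice (L : Type*) extends MulLattice L where
  top_isCompact : CompleteLattice.IsCompactElement (⊤ : L)
  compact_mul : ∀ a b : L, CompleteLattice.IsCompactElement a →
    CompleteLattice.IsCompactElement b → CompleteLattice.IsCompactElement (a * b)
  compactly_generated : ∀ a : L,
    a = sSup {c : L | CompleteLattice.IsCompactElement c ∧ c ≤ a}
  principally_generated : ∀ a : L,
    a = sSup {x : L | MulLattice.IsPrincipal x ∧ x ≤ a}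

namespace MulLattice

variable {L : Type*}

/-- A lattice domain: `0 = ⊥` is a prime element. -/
def IsLatticeDomain (L : Type*) [MulLattice L] : Prop := IsPrime (⊥ : L)

variable [PGCLattice L]

open Classical in
/-- The divisorial (`v`-)closure of `a`: equals `(x : (x : a))` for a nonzero principal
`x ≤ a` when such an `x` exists (in a lattice domain this is independent of the choice
of `x`), and `⊥` otherwise (in particular `vclos ⊥ = ⊥`). -/
noncomputable def vclos (a : L) : L :=
  if h : ∃ x : L, IsPrincipal x ∧ x ≠ ⊥ ∧ x ≤ a then
    res h.choose (res h.choose a)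
  else ⊥

/-- `a` is divisorial if `a = a_v`. -/
def IsDivisorial (a : L) : Prop := vclos a = a

/-- `L` is h-local: every nonzero prime is below a unique maximal element and
every nonzero element is below only finitely many maximal elements. -/
def IsHLocal (L : Type*) [PGCLattice L] : Prop :=
  (∀ r : L, r ≠ ⊥ → IsPrime r → ∃! m : L, IsMaximal m ∧ r ≤ m) ∧
  (∀ b : L, b ≠ ⊥ → {m : L | IsMaximal m ∧ b ≤ m}.Finite)

end MulLattice

open MulLattice

namespace MulLatticeAux

variable {L : Type*} [MulLattice L]

lemma res_mul_le (y x : L) : res y x * x ≤ y := by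
  rw [mul_comm, res, MulLattice.mul_sSup]
  exact iSup₂_le fun b hb => by rw [mul_comm]; exact hb

lemma mul_le_mul_right'' {a b : L} (h : a ≤ b) (c : L) : a * c ≤ b * c := by
  have hb : b = sSup {a, b} := by rw [sSup_pair, sup_eq_right.mpr h]
  calc a * c = c * a := mul_comm _ _
    _ ≤ c * b := by
        rw [hb, MulLattice.mul_sSup]
        exact le_iSup₂ (f := fun x (_ : x ∈ ({a, b} : Set L)) => c * x) a (by simp)
    _ = b * c := mul_comm _ _

lemma mul_le_mul_left'' {a b : L} (h : a ≤ b) (c : L) : c * a ≤ c * b := by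
  rw [mul_comm c a, mul_comm c b]; exact mul_le_mul_right'' h c

lemma le_res_iff {x y z : L} : z ≤ res y x ↔ z * x ≤ y := by
  constructor
  · intro h
    exact le_trans (mul_le_mul_right'' h x) (res_mul_le y x)
  · intro h
    exact le_sSup h

lemma res_anti {q x y : L} (h : x ≤ y) : res q y ≤ res q x :=
  le_res_iff.mpr (le_trans (mul_le_mul_left'' h _) (res_mul_le q y))

lemma mul_bot (a : L) : a * (⊥ : L) = ⊥ := by
  rw [← sSup_empty, MulLattice.mul_sSup]; simp

lemma res_bot_right (y : L) : res y (⊥ : L) = ⊤ :=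
  le_antisymm le_top (le_res_iff.mpr (by rw [mul_bot]; exact bot_le))

lemma res_bot_left_of_domain (hL : IsLatticeDomain L) {x : L} (hx : x ≠ ⊥) :
    res (⊥ : L) x = ⊥ := by
  rcases hL.2 (res ⊥ x) x (res_mul_le ⊥ x) with h | h
  · exact le_bot_iff.mp h
  · exact absurd (le_bot_iff.mp h) hx

/-- Cancellation: for principal nonzero `q`, `res (b*q) q = b`. -/
lemma res_mul_self (hL : IsLatticeDomain L) {q : L} (hq : IsPrincipal q) (hq0 : q ≠ ⊥)
    (b : L) : res (b * q) q = b := by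
  have := hq.2 b ⊥
  rw [res_bot_left_of_domain hL hq0, sup_bot_eq, sup_bot_eq] at this
  exact this.symm

lemma cancel (hL : IsLatticeDomain L) {q : L} (hq : IsPrincipal q) (hq0 : q ≠ ⊥)
    {b c : L} (h : c * q ≤ b * q) : c ≤ b := by
  rw [← res_mul_self hL hq hq0 b]
  exact le_res_iff.mpr h

/-- For meet-principal `x` and `b ≤ x`, `res b x * x = b`. -/
lemma res_mul_of_le {x b : L} (hx : IsMeetPrincipal x) (h : b ≤ x) :
    res b x * x = b := by
  have := hx b 1
  rw [one_mul, MulLattice.one_eq_top, inf_top_eq, inf_eq_left.mpr h] at this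
  exact this.symm

lemma res_sSup (q : L) (S : Set L) : res q (sSup S) = ⨅ y ∈ S, res q y := by
  apply le_antisymm
  · exact le_iInf₂ fun y hy => res_anti (le_sSup hy)
  · rw [le_res_iff, MulLattice.mul_sSup]
    exact iSup₂_le fun y hy =>
      le_trans (mul_le_mul_right'' (iInf₂_le y hy) y) (res_mul_le q y)

end MulLatticeAux

open MulLatticeAux

theorem stmt9 {L : Type*} [PGCLattice L] (hL : IsLatticeDomain L)
    (a : L) (ha : a ≠ ⊥) :
    vclos a =
      sInf {b : L | ∃ x y : L, IsPrincipal x ∧ IsPrincipal y ∧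
        b = res x y ∧ a ≤ res x y} := by
  have hex : ∃ x : L, IsPrincipal x ∧ x ≠ ⊥ ∧ x ≤ a := by
    by_contra h
    push_neg at h
    apply ha
    have hpg := PGCLattice.principally_generated a
    refine le_bot_iff.mp ?_
    rw [hpg]
    refine sSup_le fun x hx => ?_
    rcases eq_or_ne x ⊥ with rfl | hx0
    · exact le_rfl
    · exact absurd hx.2 (h x hx.1 hx0)
  rw [vclos, dif_pos hex]
  obtain ⟨hqP, hq0, hqa⟩ := hex.choose_spec
  set q := hex.choose with hqdef
  apply le_antisymm
  · refine le_sInf ?_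
    rintro b ⟨x, y, hx, hy, rfl, haxy⟩
    rcases eq_or_ne y ⊥ with rfl | hy0
    · rw [res_bot_right]; exact le_top
    rcases eq_or_ne x ⊥ with rfl | hx0
    · rw [res_bot_left_of_domain hL hy0] at haxy
      exact absurd (le_bot_iff.mp haxy) ha
    · have hqt : q ≤ res x y := hqa.trans haxy
      have hqyx : q * y ≤ x := le_res_iff.mp hqt
      set u := res (q * y) x with hudef
      have hux : u * x = q * y := res_mul_of_le hx.1 hqyx
      have hut : u ≤ res q (res x y) := by
        rw [le_res_iff]
        refine cancel hL hy hy0 ?_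
        calc u * res x y * y = u * (res x y * y) := mul_assoc _ _ _
          _ ≤ u * x := mul_le_mul_left'' (res_mul_le x y) u
          _ = q * y := hux
      calc res q (res q a)
          ≤ res q (res q (res x y)) := res_anti (res_anti haxy)
        _ ≤ res q u := res_anti hut
        _ ≤ res x y := by
            rw [le_res_iff]
            refine cancel hL hqP hq0 ?_
            calc res q u * y * q = res q u * (u * x) := by
                  rw [mul_assoc, mul_comm y q, ← hux]
              _ = res q u * u * x := (mul_assoc _ _ _).symm
              _ ≤ q * x := mul_le_mul_right'' (res_mul_le q u) x
              _ = x * q := mul_comm _ _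
  · have h1 : res q (sSup {x : L | IsPrincipal x ∧ x ≤ res q a}) =
        ⨅ y ∈ {x : L | IsPrincipal x ∧ x ≤ res q a}, res q y := res_sSup _ _
    rw [← PGCLattice.principally_generated (res q a)] at h1
    rw [h1]
    refine le_iInf₂ fun y hy => sInf_le ⟨q, y, hqP, hy.1, rfl, ?_⟩
    rw [le_res_iff, mul_comm]
    exact le_res_iff.mp hy.2
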